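/- Let w_1, ..., w_T be any (possibly random) elements of a compact convex set K in a normed space with diameter D, chosen so that w_t may depend only on ℓ_1, ..., ℓ_{t−1}. Fix a dual vector ℓ with ‖ℓ‖_* = 1 and x, y ∈ K with ⟨ℓ, x − y⟩ = D. If ℓ_t = Z_t·a_t·ℓ for i.i.d. Rademacher Z_t and non-negative reals a_t, then E[sup_{u∈K} (sum_{t=1}^T ⟨ℓ_t, w_t⟩ − sum_{t=1}^T ⟨ℓ_t, u⟩)] ≥ (D/sqrt(8))·sqrt(sum_{t=1}^T a_t²). -/

import Mathlib

open MeasureTheory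

open Finset

namespace LBcube

def rsign (b : Bool) : ℝ := if b then 1 else -1

lemma rsign_mul_self (b : Bool) : rsign b * rsign b = 1 := by cases b <;> norm_num [rsign]

lemma rsign_not (b : Bool) : rsign (!b) = - rsign b := by cases b <;> norm_num [rsign]

variable {T : ℕ}

def walsh (A : Finset (Fin T)) (η : Fin T → Bool) : ℝ := ∏ i ∈ A, rsign (η i)

lemma sum_walsh_mul (η η' : Fin T → Bool) :
    ∑ A : Finset (Fin T), walsh A η * walsh A η' = if η = η' then (2:ℝ)^T else 0 := by
  have h1 : ∀ A : Finset (Fin T), walsh A η * walsh A η'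
      = ∏ i ∈ A, (rsign (η i) * rsign (η' i)) := by
    intro A; rw [walsh, walsh, ← prod_mul_distrib]
  have h2 : ∑ A : Finset (Fin T), walsh A η * walsh A η'
      = ∏ i : Fin T, (rsign (η i) * rsign (η' i) + 1) := by
    rw [Finset.prod_add]
    rw [Finset.powerset_univ]
    exact (Finset.sum_congr rfl fun A _ => by rw [h1 A, Finset.prod_const_one, mul_one]).symm
  rw [h2]
  by_cases h : η = η'
  · subst h
    simp only [if_pos rfl]
    rw [Finset.prod_congr rfl (fun i _ => by rw [rsign_mul_self (η i)]; norm_num : ∀ i ∈ univ, rsign (η i) * rsign (η i) + 1 = 2)]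
    simp
  · rw [if_neg h]
    obtain ⟨i, hi⟩ : ∃ i, η i ≠ η' i := by
      by_contra hc; push_neg at hc; exact h (funext hc)
    refine Finset.prod_eq_zero (mem_univ i) ?_
    cases hb : η i <;> cases hb' : η' i <;> simp_all [rsign]

def coef (f : (Fin T → Bool) → ℝ) (A : Finset (Fin T)) : ℝ := ∑ η, f η * walsh A η

lemma sum_coef_mul (f h : (Fin T → Bool) → ℝ) :
    ∑ A : Finset (Fin T), coef f A * coef h A = 2^T * ∑ η, f η * h η := by
  simp only [coef]
  have : ∀ A : Finset (Fin T), (∑ η, f η * walsh A η) * (∑ η', h η' * walsh A η')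
      = ∑ η, ∑ η', (f η * h η') * (walsh A η * walsh A η') := by
    intro A
    rw [Finset.sum_mul_sum]
    exact Finset.sum_congr rfl fun η _ => Finset.sum_congr rfl fun η' _ => by ring
  rw [Finset.sum_congr rfl fun A _ => this A]
  rw [Finset.sum_comm]
  have : ∀ η : Fin T → Bool, (∑ A : Finset (Fin T), ∑ η', (f η * h η') * (walsh A η * walsh A η'))
      = 2^T * (f η * h η) := by
    intro η
    rw [Finset.sum_comm]
    have : ∀ η' : Fin T → Bool, (∑ A : Finset (Fin T), (f η * h η') * (walsh A η * walsh A η'))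
        = (f η * h η') * (if η = η' then (2:ℝ)^T else 0) := by
      intro η'; rw [← Finset.mul_sum, sum_walsh_mul]
    rw [Finset.sum_congr rfl fun η' _ => this η']
    simp [Finset.sum_ite_eq, mul_comm]
  rw [Finset.sum_congr rfl fun η _ => this η, ← Finset.mul_sum]


def flip (i : Fin T) (η : Fin T → Bool) : Fin T → Bool := Function.update η i (!(η i))

lemma flip_involutive (i : Fin T) : Function.Involutive (flip i) := by
  intro η
  funext j
  by_cases hj : j = i
  · subst hj; simp [flip]
  · simp [flip, Function.update_of_ne hj]

lemma flip_apply_self (i : Fin T) (η) : flip i η i = !(η i) := by simp [flip]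

lemma flip_apply_ne (i : Fin T) (η) {j} (hj : j ≠ i) : flip i η j = η j := by
  simp [flip, Function.update_of_ne hj]

lemma walsh_flip (A : Finset (Fin T)) (i : Fin T) (η) :
    walsh A (flip i η) = (if i ∈ A then -1 else 1) * walsh A η := by
  by_cases hi : i ∈ A
  · rw [if_pos hi, walsh, walsh, ← Finset.mul_prod_erase A _ hi, ← Finset.mul_prod_erase A _ hi]
    rw [flip_apply_self, rsign_not,
      Finset.prod_congr rfl fun j hj => by rw [flip_apply_ne i η (Finset.ne_of_mem_erase hj)]]
    ring
  · rw [if_neg hi, one_mul, walsh, walsh]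
    exact Finset.prod_congr rfl fun j hj => by
      rw [flip_apply_ne i η (fun h => hi (h ▸ hj))]

lemma coef_flip (f : (Fin T → Bool) → ℝ) (i : Fin T) (A : Finset (Fin T)) :
    coef (fun η => f (flip i η)) A = (if i ∈ A then -1 else 1) * coef f A := by
  have h := (Equiv.sum_comp ((flip_involutive i).toPerm _)
    (fun η => f (flip i η) * walsh A η)).symm
  calc coef (fun η => f (flip i η)) A
      = ∑ η, f (flip i ((flip_involutive i).toPerm _ η))
          * walsh A ((flip_involutive i).toPerm _ η) := h
    _ = ∑ η, (if i ∈ A then -1 else 1) * (f η * walsh A η) := by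
        refine Finset.sum_congr rfl fun η _ => ?_
        have hp : (flip_involutive i).toPerm _ η = flip i η := rfl
        rw [hp, flip_involutive i η, walsh_flip]
        ring
    _ = (if i ∈ A then -1 else 1) * coef f A := by rw [← Finset.mul_sum]; rfl

def negAll (η : Fin T → Bool) : Fin T → Bool := fun t => !(η t)

lemma negAll_involutive : Function.Involutive (negAll (T := T)) := by
  intro η; funext t; simp [negAll]

lemma coef_singleton (f : (Fin T → Bool) → ℝ) (hf : ∀ η, f (negAll η) = f η) (i : Fin T) :
    coef f {i} = 0 := by
  have h := Equiv.sum_comp (negAll_involutive (T := T)).toPerm (fun η => f η * walsh {i} η)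
  have h2 : ∑ η, f (negAll η) * walsh {i} (negAll η) = coef f {i} := h
  have h3 : ∀ η : Fin T → Bool, f (negAll η) * walsh {i} (negAll η) = - (f η * walsh {i} η) := by
    intro η
    rw [hf η, walsh, walsh, Finset.prod_singleton, Finset.prod_singleton]
    show f η * rsign (!(η i)) = _
    rw [rsign_not]; ring
  rw [Finset.sum_congr rfl fun η _ => h3 η, Finset.sum_neg_distrib] at h2
  have : coef f {i} = - coef f {i} := h2.symm.trans rfl
  linarith


lemma cube_khinchin (T : ℕ) (a : ℕ → ℝ) :
    (2:ℝ)^T * ∑ η : Fin T → Bool, (∑ t : Fin T, rsign (η t) * a t)^2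
      ≤ 2 * (∑ η : Fin T → Bool, |∑ t : Fin T, rsign (η t) * a t|)^2 := by
  classical
  set Sc : (Fin T → Bool) → ℝ := fun η => ∑ t : Fin T, rsign (η t) * a t with hSc
  set g : (Fin T → Bool) → ℝ := fun η => |Sc η| with hg
  set c : Finset (Fin T) → ℝ := coef g with hc
  have hg0 : ∀ η, 0 ≤ g η := fun η => abs_nonneg _
  have h_parseval : ∑ A : Finset (Fin T), c A * c A = 2^T * ∑ η, g η * g η :=
    sum_coef_mul g g
  have h_empty : c ∅ = ∑ η, g η := by
    simp [hc, coef, walsh]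
  have hScneg : ∀ η, Sc (negAll η) = - Sc η := by
    intro η
    rw [hSc, ← Finset.sum_neg_distrib]
    exact Finset.sum_congr rfl fun t _ => by
      show rsign (!(η t)) * a t = -(rsign (η t) * a t)
      rw [rsign_not]; ring
  have heven : ∀ η, g (negAll η) = g η := by
    intro η
    show |Sc (negAll η)| = |Sc η|
    rw [hScneg, abs_neg]
  have h_single : ∀ i, c {i} = 0 := fun i => coef_singleton g heven i
  have h_flipSc : ∀ (i : Fin T) η, Sc (flip i η) = Sc η - 2 * (rsign (η i) * a i) := by
    intro i η
    have : ∀ t : Fin T, rsign (flip i η t) * a t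
        = rsign (η t) * a t - (if t = i then 2 * (rsign (η i) * a i) else 0) := by
      intro t
      by_cases ht : t = i
      · subst ht; rw [if_pos rfl, flip_apply_self, rsign_not]; ring
      · rw [if_neg ht, flip_apply_ne i η ht, sub_zero]
    show ∑ t : Fin T, rsign (flip i η t) * a t = _
    rw [Finset.sum_congr rfl fun t _ => this t, Finset.sum_sub_distrib,
      Finset.sum_ite_eq' univ i, if_pos (mem_univ i)]
  have h_flipsum : ∀ η, ∑ i : Fin T, Sc (flip i η) = ((T:ℝ) - 2) * Sc η := by
    intro η
    rw [Finset.sum_congr rfl fun i _ => h_flipSc i η, Finset.sum_sub_distrib,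
      Finset.sum_const, ← Finset.mul_sum]
    simp only [card_univ, Fintype.card_fin, nsmul_eq_mul]
    have : (∑ i : Fin T, rsign (η i) * a ↑i) = Sc η := rfl
    rw [this]; ring
  have h_point : ∀ η, ((T:ℝ) - 2) * (g η * g η) ≤ g η * ∑ i : Fin T, g (flip i η) := by
    intro η
    have h1 : ((T:ℝ) - 2) * g η ≤ ∑ i : Fin T, g (flip i η) := by
      have h2 : ((T:ℝ) - 2) * g η ≤ |((T:ℝ) - 2) * Sc η| := by
        rw [abs_mul]
        exact mul_le_mul_of_nonneg_right (le_abs_self _) (abs_nonneg _)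
      rw [← h_flipsum η] at h2
      exact h2.trans (Finset.abs_sum_le_sum_abs _ _)
    calc ((T:ℝ) - 2) * (g η * g η) = g η * (((T:ℝ) - 2) * g η) := by ring
      _ ≤ g η * ∑ i : Fin T, g (flip i η) := mul_le_mul_of_nonneg_left h1 (hg0 η)
  have h_cross : ∀ i : Fin T, ∑ A : Finset (Fin T), (if i ∈ A then (-1:ℝ) else 1) * (c A * c A)
      = 2^T * ∑ η, g η * g (flip i η) := by
    intro i
    have := sum_coef_mul g (fun η => g (flip i η))
    rw [← this]
    refine Finset.sum_congr rfl fun A _ => ?_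
    rw [hc, coef_flip g i A]
    ring
  have h_inner : ∀ A : Finset (Fin T), ∑ i : Fin T, (if i ∈ A then (-1:ℝ) else 1)
      = (T:ℝ) - 2 * A.card := by
    intro A
    rw [← Finset.sum_add_sum_compl A]
    rw [Finset.sum_congr rfl (fun i hi => if_pos hi),
      Finset.sum_congr rfl (fun i (hi : i ∈ Aᶜ) => if_neg (Finset.mem_compl.mp hi))]
    rw [Finset.sum_const, Finset.sum_const, Finset.card_compl]
    have hle : A.card ≤ T := by simpa using Finset.card_le_univ A
    simp only [nsmul_eq_mul, Fintype.card_fin, mul_one, mul_neg]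
    rw [Nat.cast_sub hle]
    ring
  have h_card : ∑ A : Finset (Fin T), ((A.card:ℝ) - 1) * (c A * c A) ≤ 0 := by
    have hL : ((T:ℝ) - 2) * ∑ A : Finset (Fin T), c A * c A
        ≤ ∑ A : Finset (Fin T), ((T:ℝ) - 2 * A.card) * (c A * c A) := by
      have e1 : ∑ A : Finset (Fin T), ((T:ℝ) - 2 * A.card) * (c A * c A)
          = ∑ i : Fin T, ∑ A : Finset (Fin T), (if i ∈ A then (-1:ℝ) else 1) * (c A * c A) := by
        rw [Finset.sum_comm]
        refine Finset.sum_congr rfl fun A _ => ?_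
        rw [← Finset.sum_mul, h_inner A]
      rw [e1, Finset.sum_congr rfl fun i _ => h_cross i, ← Finset.mul_sum, h_parseval]
      rw [Finset.sum_comm]
      have e2 : ∑ η, ∑ i : Fin T, g η * g (flip i η) = ∑ η, g η * ∑ i : Fin T, g (flip i η) := by
        exact Finset.sum_congr rfl fun η _ => (Finset.mul_sum _ _ _).symm
      rw [e2]
      calc ((T:ℝ) - 2) * (2^T * ∑ η, g η * g η)
          = 2^T * (((T:ℝ) - 2) * ∑ η, g η * g η) := by ring
        _ = 2^T * ∑ η, ((T:ℝ) - 2) * (g η * g η) := by rw [Finset.mul_sum]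
        _ ≤ 2^T * ∑ η, g η * ∑ i : Fin T, g (flip i η) := by
            refine mul_le_mul_of_nonneg_left (Finset.sum_le_sum fun η _ => h_point η) (by positivity)
    have e3 : ∑ A : Finset (Fin T), ((T:ℝ) - 2 * A.card) * (c A * c A)
        = ((T:ℝ) - 2) * (∑ A : Finset (Fin T), c A * c A)
          - 2 * ∑ A : Finset (Fin T), ((A.card:ℝ) - 1) * (c A * c A) := by
      rw [Finset.mul_sum, Finset.mul_sum, ← Finset.sum_sub_distrib]
      exact Finset.sum_congr rfl fun A _ => by ring
    rw [e3] at hL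
    linarith
  have h_pt : ∀ A : Finset (Fin T), c A * c A
      ≤ (if A = ∅ then 2 * (c ∅ * c ∅) else 0) + ((A.card:ℝ) - 1) * (c A * c A) := by
    intro A
    by_cases hA : A = ∅
    · subst hA; simp; nlinarith [sq_nonneg (c ∅)]
    · rw [if_neg hA, zero_add]
      rcases Nat.lt_or_ge A.card 2 with h2 | h2
      · interval_cases h : A.card
        · exact absurd (Finset.card_eq_zero.mp h) hA
        · obtain ⟨i, rfl⟩ := Finset.card_eq_one.mp h
          rw [h_single i]
          norm_num
      · have : (1:ℝ) ≤ (A.card:ℝ) - 1 := by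
          have : (2:ℝ) ≤ (A.card:ℝ) := by exact_mod_cast h2
          linarith
        nlinarith [mul_self_nonneg (c A)]
  have h_fin : ∑ A : Finset (Fin T), c A * c A ≤ 2 * (c ∅ * c ∅) := by
    calc ∑ A : Finset (Fin T), c A * c A
        ≤ ∑ A : Finset (Fin T), ((if A = ∅ then 2 * (c ∅ * c ∅) else 0)
            + ((A.card:ℝ) - 1) * (c A * c A)) := Finset.sum_le_sum fun A _ => h_pt A
      _ = 2 * (c ∅ * c ∅) + ∑ A : Finset (Fin T), ((A.card:ℝ) - 1) * (c A * c A) := by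
          rw [Finset.sum_add_distrib, Finset.sum_ite_eq' univ ∅, if_pos (mem_univ ∅)]
      _ ≤ 2 * (c ∅ * c ∅) := by linarith
  have e4 : ∑ η : Fin T → Bool, (Sc η)^2 = ∑ η, g η * g η := by
    refine Finset.sum_congr rfl fun η _ => ?_
    rw [hg]
    show (Sc η)^2 = |Sc η| * |Sc η|
    rw [abs_mul_abs_self]; ring
  calc (2:ℝ)^T * ∑ η : Fin T → Bool, (Sc η)^2
      = 2^T * ∑ η, g η * g η := by rw [e4]
    _ = ∑ A : Finset (Fin T), c A * c A := h_parseval.symm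
    _ ≤ 2 * (c ∅ * c ∅) := h_fin
    _ = 2 * (∑ η, g η)^2 := by rw [h_empty]; ring
    _ = 2 * (∑ η : Fin T → Bool, |Sc η|)^2 := rfl


lemma cube_sum_sq (T : ℕ) (a : ℕ → ℝ) :
    ∑ η : Fin T → Bool, (∑ t : Fin T, rsign (η t) * a t)^2
      = 2^T * ∑ t : Fin T, (a t)^2 := by
  classical
  have horth : ∀ s t : Fin T, ∑ η : Fin T → Bool, rsign (η s) * rsign (η t)
      = if s = t then (2:ℝ)^T else 0 := by
    intro s t
    by_cases hst : s = t
    · subst hst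
      rw [if_pos rfl, Finset.sum_congr rfl fun η _ => rsign_mul_self (η s),
        Finset.sum_const, card_univ]
      simp [Fintype.card_fun]
    · rw [if_neg hst]
      have h := Equiv.sum_comp ((flip_involutive s).toPerm _)
        (fun η => rsign (η s) * rsign (η t))
      have h2 : ∀ η : Fin T → Bool,
          rsign ((flip_involutive s).toPerm _ η s) * rsign ((flip_involutive s).toPerm _ η t)
            = -(rsign (η s) * rsign (η t)) := by
        intro η
        have hp : (flip_involutive s).toPerm _ η = flip s η := rfl
        rw [hp, flip_apply_self, flip_apply_ne s η (Ne.symm hst), rsign_not]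
        ring
      rw [Finset.sum_congr rfl fun η _ => h2 η, Finset.sum_neg_distrib] at h
      linarith
  have e1 : ∀ η : Fin T → Bool, (∑ t : Fin T, rsign (η t) * a t)^2
      = ∑ s : Fin T, ∑ t : Fin T, (a s * a t) * (rsign (η s) * rsign (η t)) := by
    intro η
    rw [pow_two, Finset.sum_mul_sum]
    exact Finset.sum_congr rfl fun s _ => Finset.sum_congr rfl fun t _ => by ring
  rw [Finset.sum_congr rfl fun η _ => e1 η]
  rw [Finset.sum_comm]
  have e2 : ∀ s : Fin T, ∑ η : Fin T → Bool, ∑ t : Fin T, (a s * a t) * (rsign (η s) * rsign (η t))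
      = 2^T * (a s)^2 := by
    intro s
    rw [Finset.sum_comm]
    have e3 : ∀ t : Fin T, ∑ η : Fin T → Bool, (a s * a t) * (rsign (η s) * rsign (η t))
        = (a s * a t) * (if s = t then (2:ℝ)^T else 0) := by
      intro t; rw [← Finset.mul_sum, horth]
    rw [Finset.sum_congr rfl fun t _ => e3 t]
    simp [Finset.sum_ite_eq, mul_comm]
    ring
  rw [Finset.sum_congr rfl fun s _ => e2 s, ← Finset.mul_sum]

open MeasureTheory ProbabilityTheory

variable {Ω : Type*} [MeasurableSpace Ω] {μ : Measure Ω} [IsProbabilityMeasure μ]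

lemma transfer (Z : ℕ → Ω → ℝ) (hmeas : ∀ t, Measurable (Z t))
    (hindep : ProbabilityTheory.iIndepFun Z μ)
    (hplus : ∀ t, μ {ω | Z t ω = 1} = 1 / 2)
    (hminus : ∀ t, μ {ω | Z t ω = -1} = 1 / 2)
    (T : ℕ) (a : ℕ → ℝ) (φ : ℝ → ℝ) :
    Integrable (fun ω => φ (∑ t ∈ Finset.range T, Z t ω * a t)) μ ∧
    ∫ ω, φ (∑ t ∈ Finset.range T, Z t ω * a t) ∂μ
      = (2^T : ℝ)⁻¹ * ∑ η : Fin T → Bool, φ (∑ t : Fin T, rsign (η t) * a t) := by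
  classical
  set Scc : (Fin T → Bool) → ℝ := fun η => ∑ t : Fin T, rsign (η t) * a t with hScc
  set cval : (Fin T → Bool) → ℕ → ℝ :=
    fun η t => if h : t < T then rsign (η ⟨t, h⟩) else 1 with hcval
  set Eset : (Fin T → Bool) → Set Ω :=
    fun η => ⋂ t ∈ Finset.range T, {ω | Z t ω = cval η t} with hEset
  have hEmeas : ∀ η, MeasurableSet (Eset η) := by
    intro η
    exact MeasurableSet.biInter (Finset.range T).countable_toSet
      (fun t _ => (hmeas t) (measurableSet_singleton (cval η t)))
  have hindep' : ProbabilityTheory.iIndep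
      (fun i => MeasurableSpace.comap (Z i) inferInstance) μ := hindep
  have hEmu : ∀ η, μ (Eset η) = (1/2 : ENNReal)^T := by
    intro η
    have hbi := hindep'.meas_biInter (S := Finset.range T)
      (s := fun t => Z t ⁻¹' {cval η t})
      (fun t _ => ⟨{cval η t}, measurableSet_singleton _, rfl⟩)
    have heq : Eset η = ⋂ t ∈ Finset.range T, Z t ⁻¹' {cval η t} := rfl
    rw [heq, hbi]
    rw [Finset.prod_congr rfl (fun t ht => ?_), Finset.prod_const, Finset.card_range]
    have htT : t < T := Finset.mem_range.mp ht
    rw [hcval]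
    simp only [dif_pos htT]
    cases hb : η ⟨t, htT⟩
    · show μ (Z t ⁻¹' {rsign false}) = 1/2
      rw [(by norm_num [rsign] : rsign false = (-1:ℝ))]
      exact hminus t
    · show μ (Z t ⁻¹' {rsign true}) = 1/2
      rw [(by norm_num [rsign] : rsign true = (1:ℝ))]
      exact hplus t
  have hAE : ∀ᵐ ω ∂μ, ∀ t : ℕ, Z t ω = 1 ∨ Z t ω = -1 := by
    rw [MeasureTheory.ae_all_iff]
    intro t
    have hdisj : Disjoint {ω | Z t ω = 1} {ω | Z t ω = -1} := by
      rw [Set.disjoint_left]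
      intro ω h1 h2
      simp only [Set.mem_setOf_eq] at h1 h2
      rw [h1] at h2; norm_num at h2
    have hU : μ ({ω | Z t ω = 1} ∪ {ω | Z t ω = -1}) = 1 := by
      rw [measure_union hdisj ((hmeas t) (measurableSet_singleton (-1))), hplus t, hminus t]
      norm_num
      exact ENNReal.inv_two_add_inv_two
    have hmeasU : MeasurableSet ({ω | Z t ω = 1} ∪ {ω | Z t ω = -1}) :=
      ((hmeas t) (measurableSet_singleton 1)).union ((hmeas t) (measurableSet_singleton (-1)))
    have hcompl : μ ({ω | Z t ω = 1} ∪ {ω | Z t ω = -1})ᶜ = 0 := by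
      rw [prob_compl_eq_zero_iff hmeasU]
      exact hU
    rw [ae_iff]
    convert hcompl using 2
    exact Set.ext fun ω => Iff.rfl
  set F : Ω → ℝ :=
    fun ω => ∑ η : Fin T → Bool, Set.indicator (Eset η) (fun _ => φ (Scc η)) ω with hF
  have hae_eq : (fun ω => φ (∑ t ∈ Finset.range T, Z t ω * a t)) =ᵐ[μ] F := by
    filter_upwards [hAE] with ω hω
    set η₀ : Fin T → Bool := fun t => if Z t.val ω = 1 then true else false with hη₀
    have hmem : ∀ t : Fin T, Z t.val ω = rsign (η₀ t) := by
      intro t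
      have hd : η₀ t = if Z t.val ω = 1 then true else false := rfl
      by_cases h1 : Z t.val ω = 1
      · rw [hd, if_pos h1, h1]; norm_num [rsign]
      · rcases hω t.val with h2 | h2
        · exact absurd h2 h1
        · rw [hd, if_neg h1, h2]; norm_num [rsign]
    have hmemE : ω ∈ Eset η₀ := by
      rw [hEset]
      simp only [Set.mem_iInter, Set.mem_setOf_eq]
      intro t ht
      have htT : t < T := Finset.mem_range.mp ht
      rw [hcval]
      simp only [dif_pos htT]
      exact hmem ⟨t, htT⟩
    have hnot : ∀ η : Fin T → Bool, η ≠ η₀ → ω ∉ Eset η := by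
      intro η hne hmemη
      apply hne
      funext t
      rw [hEset] at hmemη
      simp only [Set.mem_iInter, Set.mem_setOf_eq] at hmemη
      have h1 := hmemη t.val (Finset.mem_range.mpr t.isLt)
      rw [hcval] at h1
      simp only [dif_pos t.isLt] at h1
      have h2 : rsign (η ⟨t.val, t.isLt⟩) = rsign (η₀ t) := by
        rw [← h1]; exact hmem t
      have h3 : η ⟨t.val, t.isLt⟩ = η t := by congr
      rw [h3] at h2
      cases hb : η t <;> cases hb' : η₀ t <;> rw [hb, hb'] at h2 <;>
        first | rfl | (norm_num [rsign] at h2)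
    have hFω : F ω = φ (Scc η₀) := by
      show (∑ η : Fin T → Bool, Set.indicator (Eset η) (fun _ => φ (Scc η)) ω) = _
      rw [Finset.sum_eq_single η₀]
      · rw [Set.indicator_of_mem hmemE]
      · intro η _ hne
        rw [Set.indicator_of_notMem (hnot η hne)]
      · intro h; exact absurd (Finset.mem_univ η₀) h
    rw [hFω]
    congr 1
    rw [← Fin.sum_univ_eq_sum_range (fun t => Z t ω * a t) T]
    exact Finset.sum_congr rfl fun t _ => by rw [hmem t]
  have hFint : Integrable F μ := by
    apply integrable_finset_sum
    intro η _
    exact (integrable_const (φ (Scc η))).indicator (hEmeas η)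
  constructor
  · exact hFint.congr hae_eq.symm
  · rw [integral_congr_ae hae_eq, hF, integral_finset_sum _
      (fun η _ => (integrable_const (φ (Scc η))).indicator (hEmeas η))]
    have : ∀ η : Fin T → Bool,
        ∫ ω, Set.indicator (Eset η) (fun _ => φ (Scc η)) ω ∂μ
          = (2^T : ℝ)⁻¹ * φ (Scc η) := by
      intro η
      rw [integral_indicator_const _ (hEmeas η), measureReal_def, hEmu η]
      rw [smul_eq_mul]
      congr 1
      rw [ENNReal.toReal_pow, one_div, ENNReal.toReal_inv, inv_pow]
      norm_num
    rw [Finset.sum_congr rfl fun η _ => this η, ← Finset.mul_sum]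


lemma sum_rsign_zero (T : ℕ) (t : Fin T) : ∑ η : Fin T → Bool, rsign (η t) = 0 := by
  have h := Equiv.sum_comp ((flip_involutive t).toPerm _) (fun η => rsign (η t))
  have h2 : ∀ η : Fin T → Bool, rsign (((flip_involutive t).toPerm _) η t) = - rsign (η t) := by
    intro η
    have hp : (flip_involutive t).toPerm _ η = flip t η := rfl
    rw [hp, flip_apply_self, rsign_not]
  rw [Finset.sum_congr rfl fun η _ => h2 η, Finset.sum_neg_distrib] at h
  linarith

lemma cube_sum_zero (T : ℕ) (a : ℕ → ℝ) :
    ∑ η : Fin T → Bool, (∑ t : Fin T, rsign (η t) * a t) = 0 := by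
  rw [Finset.sum_comm]
  rw [Finset.sum_congr rfl fun t (_ : t ∈ univ) => ?_, Finset.sum_const_zero]
  rw [← Finset.sum_mul, sum_rsign_zero, zero_mul]

variable (Z : ℕ → Ω → ℝ) (hmeas : ∀ t, Measurable (Z t))
  (hplus : ∀ t, μ {ω | Z t ω = 1} = 1 / 2)
  (hminus : ∀ t, μ {ω | Z t ω = -1} = 1 / 2)

include hmeas hplus hminus

lemma rademacher_ae (t : ℕ) : ∀ᵐ ω ∂μ, Z t ω = 1 ∨ Z t ω = -1 := by
  have hdisj : Disjoint {ω | Z t ω = 1} {ω | Z t ω = -1} := by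
    rw [Set.disjoint_left]
    intro ω h1 h2
    simp only [Set.mem_setOf_eq] at h1 h2
    rw [h1] at h2; norm_num at h2
  have hU : μ ({ω | Z t ω = 1} ∪ {ω | Z t ω = -1}) = 1 := by
    rw [measure_union hdisj ((hmeas t) (measurableSet_singleton (-1))), hplus t, hminus t]
    norm_num
    exact ENNReal.inv_two_add_inv_two
  have hmeasU : MeasurableSet ({ω | Z t ω = 1} ∪ {ω | Z t ω = -1}) :=
    ((hmeas t) (measurableSet_singleton 1)).union ((hmeas t) (measurableSet_singleton (-1)))
  have hcompl : μ ({ω | Z t ω = 1} ∪ {ω | Z t ω = -1})ᶜ = 0 := by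
    rw [prob_compl_eq_zero_iff hmeasU]
    exact hU
  rw [ae_iff]
  convert hcompl using 2
  exact Set.ext fun ω => Iff.rfl

lemma rademacher_abs_ae : ∀ᵐ ω ∂μ, ∀ t : ℕ, |Z t ω| ≤ 1 := by
  rw [MeasureTheory.ae_all_iff]
  intro t
  filter_upwards [rademacher_ae Z hmeas hplus hminus t] with ω hω
  rcases hω with h | h <;> rw [h] <;> norm_num

lemma integrable_Z (t : ℕ) : Integrable (Z t) μ := by
  refine Integrable.mono' (integrable_const (1:ℝ)) (hmeas t).aestronglyMeasurable ?_
  filter_upwards [rademacher_ae Z hmeas hplus hminus t] with ω hω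
  rcases hω with h | h <;> rw [Real.norm_eq_abs, h] <;> norm_num

lemma integral_Z (t : ℕ) : ∫ ω, Z t ω ∂μ = 0 := by
  have hae : Z t =ᵐ[μ] fun ω => Set.indicator {ω | Z t ω = 1} (fun _ => (1:ℝ)) ω
      - Set.indicator {ω | Z t ω = -1} (fun _ => (1:ℝ)) ω := by
    filter_upwards [rademacher_ae Z hmeas hplus hminus t] with ω hω
    rcases hω with h | h
    · have h2 : ω ∉ {ω | Z t ω = -1} := by
        intro hc; simp only [Set.mem_setOf_eq] at hc; rw [h] at hc; norm_num at hc
      rw [Set.indicator_of_mem (by exact h) , Set.indicator_of_notMem h2, h]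
      norm_num
    · have h2 : ω ∉ {ω | Z t ω = 1} := by
        intro hc; simp only [Set.mem_setOf_eq] at hc; rw [h] at hc; norm_num at hc
      rw [Set.indicator_of_notMem h2, Set.indicator_of_mem (by exact h), h]
      norm_num
  have hms1 : MeasurableSet {ω | Z t ω = 1} := (hmeas t) (measurableSet_singleton 1)
  have hms2 : MeasurableSet {ω | Z t ω = -1} := (hmeas t) (measurableSet_singleton (-1))
  have hi1 : Integrable (fun ω => Set.indicator {ω | Z t ω = 1} (fun _ => (1:ℝ)) ω) μ :=
    (integrable_const (1:ℝ)).indicator hms1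
  have hi2 : Integrable (fun ω => Set.indicator {ω | Z t ω = -1} (fun _ => (1:ℝ)) ω) μ :=
    (integrable_const (1:ℝ)).indicator hms2
  rw [integral_congr_ae hae, integral_sub hi1 hi2]
  rw [integral_indicator_const _ hms1, integral_indicator_const _ hms2, measureReal_def, measureReal_def, hplus t, hminus t]
  simp

lemma indepFun_past (hindep : ProbabilityTheory.iIndepFun Z μ)
    (t : ℕ) (ψ : Ω → ℝ)
    (hψ : @Measurable Ω ℝ
      (MeasurableSpace.comap (fun ω (s : Fin t) => Z s ω) MeasurableSpace.pi) _ ψ) :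
    ProbabilityTheory.IndepFun ψ (Z t) μ := by
  classical
  have hdisj : Disjoint (Finset.range t) ({t} : Finset ℕ) := by
    simp [Finset.disjoint_singleton_right]
  have h1 : ProbabilityTheory.IndepFun
      (fun ω (i : ↥(Finset.range t)) => Z i ω)
      (fun ω (i : ↥({t} : Finset ℕ)) => Z i ω) μ :=
    hindep.indepFun_finset (Finset.range t) {t} hdisj hmeas
  have h2 : ProbabilityTheory.Indep
      (MeasurableSpace.comap (fun ω (i : ↥(Finset.range t)) => Z i ω)
        MeasurableSpace.pi)
      (MeasurableSpace.comap (fun ω (i : ↥({t} : Finset ℕ)) => Z i ω)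
        MeasurableSpace.pi) μ := h1
  -- left σ-algebra dominates comap ψ
  have hreindex : Measurable (fun (v : ↥(Finset.range t) → ℝ) (s : Fin t) =>
      v ⟨s.val, Finset.mem_range.mpr s.isLt⟩) :=
    measurable_pi_lambda _ (fun s => measurable_pi_apply _)
  have hcomp : (fun ω (s : Fin t) => Z s ω)
      = (fun (v : ↥(Finset.range t) → ℝ) (s : Fin t) =>
          v ⟨s.val, Finset.mem_range.mpr s.isLt⟩)
        ∘ (fun ω (i : ↥(Finset.range t)) => Z i ω) := rfl
  have hl : MeasurableSpace.comap ψ inferInstance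
      ≤ MeasurableSpace.comap (fun ω (i : ↥(Finset.range t)) => Z i ω)
        MeasurableSpace.pi := by
    refine le_trans (measurable_iff_comap_le.mp hψ) ?_
    rw [hcomp, ← MeasurableSpace.comap_comp]
    exact MeasurableSpace.comap_mono (measurable_iff_comap_le.mp hreindex)
  have heval : Measurable (fun (v : ↥({t} : Finset ℕ) → ℝ) =>
      v ⟨t, Finset.mem_singleton_self t⟩) := measurable_pi_apply _
  have hcompr : Z t = (fun (v : ↥({t} : Finset ℕ) → ℝ) =>
      v ⟨t, Finset.mem_singleton_self t⟩) ∘ (fun ω (i : ↥({t} : Finset ℕ)) => Z i ω) := rfl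
  have hr : MeasurableSpace.comap (Z t) inferInstance
      ≤ MeasurableSpace.comap (fun ω (i : ↥({t} : Finset ℕ)) => Z i ω)
        MeasurableSpace.pi := by
    rw [hcompr, ← MeasurableSpace.comap_comp]
    exact MeasurableSpace.comap_mono (measurable_iff_comap_le.mp heval)
  exact ProbabilityTheory.indep_of_indep_of_le_left
    (ProbabilityTheory.indep_of_indep_of_le_right h2 hr) hl

end LBcube


/-- Lower-bound construction (Theorem 6): against losses `ℓ_t = Z_t a_t ℓ` with
i.i.d. Rademacher signs `Z_t`, any algorithm whose decision `w_t` depends only on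
the past signs `Z_0, …, Z_{t-1}` has expected regret at least
`(D/√8) √(∑ a_t²)`, where `D` is the diameter of `K`, witnessed by
`x, y ∈ K` with `⟨ℓ, x - y⟩ = D` and `‖ℓ‖_* = 1`. -/
theorem lower_bound_expected_regret {E : Type*} [NormedAddCommGroup E]
    [NormedSpace ℝ E] [MeasurableSpace E] [BorelSpace E]
    {Ω : Type*} [MeasurableSpace Ω] (μ : Measure Ω) [IsProbabilityMeasure μ]
    (K : Set E) (hKcomp : IsCompact K) (hKconv : Convex ℝ K) (hK : K.Nonempty)
    (D : ℝ) (hD : D = Metric.diam K)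
    (ℓ : E →L[ℝ] ℝ) (hℓ : ‖ℓ‖ = 1)
    (x y : E) (hx : x ∈ K) (hy : y ∈ K) (hxy : ℓ x - ℓ y = D)
    (Z : ℕ → Ω → ℝ) (hmeas : ∀ t, Measurable (Z t))
    (hindep : ProbabilityTheory.iIndepFun Z μ)
    (hplus : ∀ t, μ {ω | Z t ω = 1} = 1 / 2)
    (hminus : ∀ t, μ {ω | Z t ω = -1} = 1 / 2)
    (T : ℕ) (a : ℕ → ℝ) (ha : ∀ t, 0 ≤ a t)
    (w : ℕ → Ω → E) (hw : ∀ t ω, w t ω ∈ K)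
    (hadapted : ∀ t,
      @Measurable Ω E (MeasurableSpace.comap (fun ω (s : Fin t) => Z s ω) inferInstance) _
        (w t)) :
    (D / Real.sqrt 8) * Real.sqrt (∑ t ∈ Finset.range T, (a t) ^ 2)
      ≤ ∫ ω, sSup ((fun u =>
            (∑ t ∈ Finset.range T, Z t ω * a t * ℓ (w t ω))
              - ∑ t ∈ Finset.range T, Z t ω * a t * ℓ u) '' K) ∂μ := by
  classical
  have hDnn : 0 ≤ D := hD ▸ Metric.diam_nonneg
  set σ : ℝ := ∑ t ∈ Finset.range T, (a t) ^ 2 with hσdef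
  have hσnn : 0 ≤ σ := Finset.sum_nonneg fun t _ => sq_nonneg _
  set S : Ω → ℝ := fun ω => ∑ t ∈ Finset.range T, Z t ω * a t with hSdef
  set C : Ω → ℝ := fun ω => ∑ t ∈ Finset.range T, Z t ω * a t * ℓ (w t ω) with hCdef
  -- bound on ℓ over K
  obtain ⟨Cb, hCbn⟩ := hKcomp.exists_bound_of_continuousOn ℓ.continuous.continuousOn
  have hCb' : ∀ u ∈ K, |ℓ u| ≤ Cb := fun u hu => by
    simpa [Real.norm_eq_abs] using hCbn u hu
  have hCb0 : 0 ≤ Cb := by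
    obtain ⟨u, hu⟩ := hK
    exact le_trans (abs_nonneg _) (hCb' u hu)
  have hKimg : IsCompact (ℓ '' K) := hKcomp.image ℓ.continuous
  have hne : (ℓ '' K).Nonempty := hK.image ℓ
  set m : ℝ := sInf (ℓ '' K) with hmdef
  set M : ℝ := sSup (ℓ '' K) with hMdef
  have hm_mem : m ∈ ℓ '' K := hKimg.sInf_mem hne
  have hM_mem : M ∈ ℓ '' K := hKimg.sSup_mem hne
  have hlb : ∀ u ∈ K, m ≤ ℓ u := fun u hu => csInf_le hKimg.bddBelow ⟨u, hu, rfl⟩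
  have hub : ∀ u ∈ K, ℓ u ≤ M := fun u hu => le_csSup hKimg.bddAbove ⟨u, hu, rfl⟩
  have hmM : m ≤ M := by
    obtain ⟨u, hu, hul⟩ := hm_mem
    rw [← hul]
    exact hub u hu
  -- measurability
  have htuple_meas : ∀ t : ℕ, Measurable (fun ω (s : Fin t) => Z s ω) :=
    fun t => measurable_pi_lambda _ (fun s => hmeas s)
  have hw_meas : ∀ t, Measurable (w t) :=
    fun t => (hadapted t).mono (measurable_iff_comap_le.mp (htuple_meas t)) le_rfl
  have hS_meas : Measurable S :=
    Finset.measurable_sum _ (fun t _ => (hmeas t).mul_const _)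
  have hC_meas : Measurable C :=
    Finset.measurable_sum _ (fun t _ =>
      ((hmeas t).mul_const _).mul (ℓ.continuous.measurable.comp (hw_meas t)))
  -- a.e. bounds
  have hZb := LBcube.rademacher_abs_ae (μ := μ) Z hmeas hplus hminus
  set Ba : ℝ := ∑ t ∈ Finset.range T, a t with hBadef
  set Bc : ℝ := ∑ t ∈ Finset.range T, a t * Cb with hBcdef
  have hBa0 : 0 ≤ Ba := Finset.sum_nonneg fun t _ => ha t
  have hSb : ∀ᵐ ω ∂μ, |S ω| ≤ Ba := by
    filter_upwards [hZb] with ω hω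
    calc |S ω| ≤ ∑ t ∈ Finset.range T, |Z t ω * a t| := Finset.abs_sum_le_sum_abs _ _
      _ ≤ Ba := by
          refine Finset.sum_le_sum fun t _ => ?_
          rw [abs_mul, abs_of_nonneg (ha t)]
          simpa using mul_le_mul_of_nonneg_right (hω t) (ha t)
  have hCbd : ∀ᵐ ω ∂μ, |C ω| ≤ Bc := by
    filter_upwards [hZb] with ω hω
    calc |C ω| ≤ ∑ t ∈ Finset.range T, |Z t ω * a t * ℓ (w t ω)| :=
        Finset.abs_sum_le_sum_abs _ _
      _ ≤ Bc := by
          refine Finset.sum_le_sum fun t _ => ?_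
          rw [abs_mul, abs_mul, abs_of_nonneg (ha t)]
          calc |Z t ω| * a t * |ℓ (w t ω)|
              ≤ (1 * a t) * Cb := by
                refine mul_le_mul (by simpa using mul_le_mul_of_nonneg_right (hω t) (ha t))
                  (hCb' (w t ω) (hw t ω)) (abs_nonneg _) (by linarith [ha t])
            _ = a t * Cb := by ring
  -- integrabilities
  have hS_int : Integrable S μ :=
    (LBcube.transfer Z hmeas hindep hplus hminus T a (fun v => v)).1
  have hSabs_int : Integrable (fun ω => |S ω|) μ :=
    (LBcube.transfer Z hmeas hindep hplus hminus T a (fun v => |v|)).1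
  have hC_int : Integrable C μ := by
    refine Integrable.mono' (integrable_const Bc) hC_meas.aestronglyMeasurable ?_
    filter_upwards [hCbd] with ω hω
    rw [Real.norm_eq_abs]
    exact hω
  -- integral of S is zero
  have hS_int0 : ∫ ω, S ω ∂μ = 0 := by
    have h2 : ∫ ω, S ω ∂μ
        = (2^T : ℝ)⁻¹ * ∑ η : Fin T → Bool, (∑ t : Fin T, LBcube.rsign (η t) * a t) :=
      (LBcube.transfer Z hmeas hindep hplus hminus T a (fun v => v)).2
    rw [h2, LBcube.cube_sum_zero T a, mul_zero]
  -- integral of C is zero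
  have hC_int0 : ∫ ω, C ω ∂μ = 0 := by
    have hterm_int : ∀ t, Integrable (fun ω => Z t ω * a t * ℓ (w t ω)) μ := by
      intro t
      refine Integrable.mono' (integrable_const (a t * Cb))
        (((hmeas t).mul_const _).mul
          (ℓ.continuous.measurable.comp (hw_meas t))).aestronglyMeasurable ?_
      filter_upwards [hZb] with ω hω
      rw [Real.norm_eq_abs, abs_mul, abs_mul, abs_of_nonneg (ha t)]
      calc |Z t ω| * a t * |ℓ (w t ω)|
          ≤ (1 * a t) * Cb := by
            refine mul_le_mul (by simpa using mul_le_mul_of_nonneg_right (hω t) (ha t))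
              (hCb' (w t ω) (hw t ω)) (abs_nonneg _) (by linarith [ha t])
        _ = a t * Cb := by ring
    have hCsum : ∫ ω, C ω ∂μ
        = ∑ t ∈ Finset.range T, ∫ ω, Z t ω * a t * ℓ (w t ω) ∂μ :=
      integral_finset_sum _ (fun t _ => hterm_int t)
    rw [hCsum]
    refine Finset.sum_eq_zero fun t _ => ?_
    set ψ : Ω → ℝ := fun ω => a t * ℓ (w t ω) with hψdef
    have hψc : @Measurable Ω ℝ
        (MeasurableSpace.comap (fun ω (s : Fin t) => Z s ω) MeasurableSpace.pi) _ ψ :=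
      (measurable_const.mul ℓ.continuous.measurable).comp (hadapted t)
    have hIF : ProbabilityTheory.IndepFun ψ (Z t) μ :=
      LBcube.indepFun_past Z hmeas hplus hminus hindep t ψ hψc
    have hψ_int : Integrable ψ μ := by
      refine Integrable.mono' (integrable_const (a t * Cb))
        (measurable_const.mul
          (ℓ.continuous.measurable.comp (hw_meas t))).aestronglyMeasurable ?_
      refine Filter.Eventually.of_forall fun ω => ?_
      rw [Real.norm_eq_abs, hψdef]
      show |a t * ℓ (w t ω)| ≤ a t * Cb
      rw [abs_mul, abs_of_nonneg (ha t)]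
      exact mul_le_mul_of_nonneg_left (hCb' (w t ω) (hw t ω)) (ha t)
    have hmul := hIF.integral_fun_mul_eq_mul_integral hψ_int.aestronglyMeasurable
      (LBcube.integrable_Z Z hmeas hplus hminus t).aestronglyMeasurable
    have hre : (fun ω => Z t ω * a t * ℓ (w t ω)) = fun ω => ψ ω * Z t ω := by
      funext ω; rw [hψdef]; ring
    rw [hre]
    have : ∫ ω, ψ ω * Z t ω ∂μ = (∫ ω, ψ ω ∂μ) * ∫ ω, Z t ω ∂μ := hmul
    rw [this, LBcube.integral_Z Z hmeas hplus hminus t, mul_zero]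
  -- lower bound on E|S|
  have hI0 : 0 ≤ ∫ ω, |S ω| ∂μ := integral_nonneg fun ω => abs_nonneg _
  have habs0 : Real.sqrt (σ / 2) ≤ ∫ ω, |S ω| ∂μ := by
    have hI : ∫ ω, |S ω| ∂μ
        = (2^T : ℝ)⁻¹ * ∑ η : Fin T → Bool, |∑ t : Fin T, LBcube.rsign (η t) * a t| :=
      (LBcube.transfer Z hmeas hindep hplus hminus T a (fun v => |v|)).2
    set A : ℝ := ∑ η : Fin T → Bool, |∑ t : Fin T, LBcube.rsign (η t) * a t| with hAdef
    have hP2 : (0:ℝ) < 2^T := by positivity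
    have hIA : (2:ℝ)^T * ∫ ω, |S ω| ∂μ = A := by
      rw [hI]
      field_simp
    have hA := LBcube.cube_khinchin T a
    have hQ := LBcube.cube_sum_sq T a
    have hfin : ∑ t : Fin T, (a t)^2 = σ := by
      rw [hσdef]
      exact Fin.sum_univ_eq_sum_range (fun i => (a i)^2) T
    rw [hQ, hfin] at hA
    -- hA : 2^T * (2^T * σ) ≤ 2 * A^2
    have hA2 : A^2 = ((2:ℝ)^T)^2 * (∫ ω, |S ω| ∂μ)^2 := by
      rw [← hIA]; ring
    have hP2' : (0:ℝ) < ((2:ℝ)^T)^2 := by positivity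
    have h6 : ((2:ℝ)^T)^2 * σ ≤ ((2:ℝ)^T)^2 * (2 * (∫ ω, |S ω| ∂μ)^2) := by
      nlinarith [hA, hA2]
    have h7 : σ ≤ 2 * (∫ ω, |S ω| ∂μ)^2 := (mul_le_mul_iff_right₀ hP2').mp h6
    have key : σ / 2 ≤ (∫ ω, |S ω| ∂μ)^2 := by linarith
    have := Real.sqrt_le_sqrt key
    rwa [Real.sqrt_sq hI0] at this
  -- pointwise identification of the supremum
  have hsum_mul : ∀ (ω : Ω) (u : E),
      (∑ t ∈ Finset.range T, Z t ω * a t * ℓ u) = S ω * ℓ u := by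
    intro ω u
    rw [hSdef]
    exact (Finset.sum_mul _ _ _).symm
  set R : Ω → ℝ := fun ω => max (C ω - S ω * m) (C ω - S ω * M) with hRdef
  have h_eq : ∀ ω, sSup ((fun u =>
        (∑ t ∈ Finset.range T, Z t ω * a t * ℓ (w t ω))
          - ∑ t ∈ Finset.range T, Z t ω * a t * ℓ u) '' K) = R ω := by
    intro ω
    have hCC : (∑ t ∈ Finset.range T, Z t ω * a t * ℓ (w t ω)) = C ω := rfl
    refine IsGreatest.csSup_eq ⟨?_, ?_⟩
    · rcases le_or_gt 0 (S ω) with hs | hs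
      · have hmax : R ω = C ω - S ω * m := by
          rw [hRdef]
          exact max_eq_left (by nlinarith)
        rw [hmax]
        obtain ⟨u, hu, hul⟩ := hm_mem
        refine ⟨u, hu, ?_⟩
        show (∑ t ∈ Finset.range T, Z t ω * a t * ℓ (w t ω))
            - (∑ t ∈ Finset.range T, Z t ω * a t * ℓ u) = C ω - S ω * m
        rw [hsum_mul ω u, hul, hCC]
      · have hmax : R ω = C ω - S ω * M := by
          rw [hRdef]
          exact max_eq_right (by nlinarith)
        rw [hmax]
        obtain ⟨u, hu, hul⟩ := hM_mem
        refine ⟨u, hu, ?_⟩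
        show (∑ t ∈ Finset.range T, Z t ω * a t * ℓ (w t ω))
            - (∑ t ∈ Finset.range T, Z t ω * a t * ℓ u) = C ω - S ω * M
        rw [hsum_mul ω u, hul, hCC]
    · rintro v ⟨u, hu, rfl⟩
      show (∑ t ∈ Finset.range T, Z t ω * a t * ℓ (w t ω))
          - (∑ t ∈ Finset.range T, Z t ω * a t * ℓ u) ≤ R ω
      rw [hsum_mul ω u, hCC, hRdef]
      rcases le_or_gt 0 (S ω) with hs | hs
      · refine le_trans ?_ (le_max_left _ _)
        have hmul : S ω * m ≤ S ω * ℓ u := mul_le_mul_of_nonneg_left (hlb u hu) hs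
        linarith
      · refine le_trans ?_ (le_max_right _ _)
        have hmul : S ω * M ≤ S ω * ℓ u := mul_le_mul_of_nonpos_left (hub u hu) hs.le
        linarith
  -- pointwise lower bound on R
  set G : Ω → ℝ := fun ω => C ω - S ω * ((ℓ x + ℓ y)/2) + |S ω| * (D/2) with hGdef
  have hpt : ∀ ω, G ω ≤ R ω := by
    intro ω
    show C ω - S ω * ((ℓ x + ℓ y)/2) + |S ω| * (D/2)
        ≤ max (C ω - S ω * m) (C ω - S ω * M)
    rcases le_or_gt 0 (S ω) with hs | hs
    · have habs : |S ω| = S ω := abs_of_nonneg hs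
      have hEq : C ω - S ω * ((ℓ x + ℓ y)/2) + |S ω| * (D/2) = C ω - S ω * ℓ y := by
        rw [habs, ← hxy]; ring
      rw [hEq]
      refine le_trans ?_ (le_max_left _ _)
      have hmul : S ω * m ≤ S ω * ℓ y := mul_le_mul_of_nonneg_left (hlb y hy) hs
      linarith
    · have habs : |S ω| = -S ω := abs_of_neg hs
      have hEq : C ω - S ω * ((ℓ x + ℓ y)/2) + |S ω| * (D/2) = C ω - S ω * ℓ x := by
        rw [habs, ← hxy]; ring
      rw [hEq]
      refine le_trans ?_ (le_max_right _ _)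
      have hmul : S ω * M ≤ S ω * ℓ x := mul_le_mul_of_nonpos_left (hub x hx) hs.le
      linarith
  -- integrability of R and G
  have htri : ∀ p q : ℝ, |p - q| ≤ |p| + |q| := by
    intro p q
    calc |p - q| = |p + -q| := by ring_nf
      _ ≤ |p| + |-q| := abs_add_le _ _
      _ = |p| + |q| := by rw [abs_neg]
  have hR_int : Integrable R μ := by
    refine Integrable.mono' (integrable_const (Bc + Ba * (|m| + |M|)))
      ((hC_meas.sub (hS_meas.mul_const m)).max
        (hC_meas.sub (hS_meas.mul_const M))).aestronglyMeasurable ?_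
    filter_upwards [hCbd, hSb] with ω h1 h2
    rw [Real.norm_eq_abs]
    show |max (C ω - S ω * m) (C ω - S ω * M)| ≤ Bc + Ba * (|m| + |M|)
    rcases max_cases (C ω - S ω * m) (C ω - S ω * M) with ⟨hE, _⟩ | ⟨hE, _⟩ <;>
      rw [hE]
    · calc |C ω - S ω * m| ≤ |C ω| + |S ω * m| := htri _ _
        _ ≤ Bc + Ba * (|m| + |M|) := by
            rw [abs_mul]
            have e1 : |S ω| * |m| ≤ Ba * |m| :=
              mul_le_mul_of_nonneg_right h2 (abs_nonneg m)
            have e2 : Ba * |m| ≤ Ba * (|m| + |M|) :=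
              mul_le_mul_of_nonneg_left (by linarith [abs_nonneg M]) hBa0
            linarith
    · calc |C ω - S ω * M| ≤ |C ω| + |S ω * M| := htri _ _
        _ ≤ Bc + Ba * (|m| + |M|) := by
            rw [abs_mul]
            have e1 : |S ω| * |M| ≤ Ba * |M| :=
              mul_le_mul_of_nonneg_right h2 (abs_nonneg M)
            have e2 : Ba * |M| ≤ Ba * (|m| + |M|) :=
              mul_le_mul_of_nonneg_left (by linarith [abs_nonneg m]) hBa0
            linarith
  have hint1 : Integrable (fun ω' => C ω' - S ω' * ((ℓ x + ℓ y)/2)) μ :=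
    hC_int.sub (hS_int.mul_const _)
  have hint3 : Integrable (fun ω' => S ω' * ((ℓ x + ℓ y)/2)) μ := hS_int.mul_const _
  have hint2 : Integrable (fun ω' => |S ω'| * (D/2)) μ := hSabs_int.mul_const _
  have hG_int : Integrable G μ := by
    rw [hGdef]
    exact hint1.add hint2
  have hG_val : ∫ ω, G ω ∂μ = (∫ ω, |S ω| ∂μ) * (D/2) := by
    show ∫ ω, (C ω - S ω * ((ℓ x + ℓ y)/2) + |S ω| * (D/2)) ∂μ = _
    rw [integral_add hint1 hint2, integral_sub hC_int hint3,
      integral_mul_const, integral_mul_const, hC_int0, hS_int0]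
    ring
  -- chain of inequalities
  have hGR : ∫ ω, G ω ∂μ ≤ ∫ ω, R ω ∂μ :=
    integral_mono hG_int hR_int hpt
  have hfinal_eq : ∫ ω, sSup ((fun u =>
        (∑ t ∈ Finset.range T, Z t ω * a t * ℓ (w t ω))
          - ∑ t ∈ Finset.range T, Z t ω * a t * ℓ u) '' K) ∂μ = ∫ ω, R ω ∂μ :=
    integral_congr_ae (Filter.Eventually.of_forall h_eq)
  rw [hfinal_eq]
  have hsqrt8 : Real.sqrt 8 = 2 * Real.sqrt 2 := by
    rw [show (8:ℝ) = 2^2 * 2 by norm_num, Real.sqrt_mul (by positivity), Real.sqrt_sq (by norm_num)]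
  have hnum : (D / Real.sqrt 8) * Real.sqrt σ = (D/2) * Real.sqrt (σ/2) := by
    rw [Real.sqrt_div hσnn 2, hsqrt8]
    have h2 : Real.sqrt 2 ≠ 0 := by positivity
    field_simp
  calc (D / Real.sqrt 8) * Real.sqrt σ = (D/2) * Real.sqrt (σ/2) := hnum
    _ ≤ (D/2) * ∫ ω, |S ω| ∂μ :=
        mul_le_mul_of_nonneg_left habs0 (by linarith)
    _ = ∫ ω, G ω ∂μ := by rw [hG_val]; ring
    _ ≤ ∫ ω, R ω ∂μ := hGR
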